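/- Let Γ be a discrete subgroup of SL(2,ℝ) containing T = [[1,1],[0,1]], such that every element [[a,b],[c,d]] ∈ Γ with c = 0 equals ±Tⁿ for some integer n. Let x₀ ∈ ℝ and suppose the Ford set F(Γ,x₀) equals the Dirichlet set D(Γ,z₀) for some z₀ ∈ ℍ (i.e. Γ admits a DF domain P := F(Γ,x₀)). Then for every γ ∈ Γ and every v ∈ P with γ•v ∈ P, one has Im(γ•v) = Im(v), and either Re(γ•v) = Re(v) or Re(γ•v) + Re(v) = 2x₀ + 1; that is, every side-pairing of a DF domain identifies each boundary point either with itself or with its mirror image in the vertical line {Re(z) = x₀ + 1/2}. -/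

import Mathlib

open UpperHalfPlane Matrix Complex
open scoped MatrixGroups

/-- The topology on `SL(2,ℝ)` induced from the space of 2×2 real matrices. -/
def slTopology : TopologicalSpace SL(2, ℝ) :=
  TopologicalSpace.induced (fun g => (g : Matrix (Fin 2) (Fin 2) ℝ)) inferInstance

/-- A subgroup of `SL(2,ℝ)` is discrete if it carries the discrete topology as a
subspace of `SL(2,ℝ)`. -/
def IsDiscreteSubgroup (Γ : Subgroup SL(2, ℝ)) : Prop :=
  @DiscreteTopology Γ (TopologicalSpace.induced (Subtype.val : Γ → SL(2, ℝ)) slTopology)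

/-- The Dirichlet set of a subgroup `Γ ≤ SL(2,ℝ)` centered at `z₀ ∈ ℍ`. -/
def dirichletSet (Γ : Subgroup SL(2, ℝ)) (z₀ : ℍ) : Set ℍ :=
  {x : ℍ | ∀ γ ∈ Γ, dist x z₀ ≤ dist x (γ • z₀)}

/-- The Ford set of a subgroup `Γ ≤ SL(2,ℝ)` over the vertical strip `[x₀, x₀+1]`. -/
def fordSet (Γ : Subgroup SL(2, ℝ)) (x₀ : ℝ) : Set ℍ :=
  {z : ℍ | x₀ ≤ z.re ∧ z.re ≤ x₀ + 1 ∧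
    ∀ g ∈ Γ, g 1 0 ≠ 0 → 1 ≤ ‖(g 1 0 : ℂ) * (z : ℂ) + (g 1 1 : ℂ)‖}

/-- The parabolic translation `T = [[1,1],[0,1]]` in `SL(2,ℝ)`. -/
def T : SL(2, ℝ) :=
  ⟨!![1, 1; 0, 1], by norm_num [Matrix.det_fin_two_of]⟩


open Filter in
lemma discrete_eventually (Γ : Subgroup SL(2, ℝ)) (hdisc : IsDiscreteSubgroup Γ) (hT : T ∈ Γ)
    (s : ℕ → SL(2,ℝ)) (hs : ∀ n, s n ∈ Γ)
    (hlim : Tendsto (fun n => ((s n : SL(2,ℝ)) : Matrix (Fin 2) (Fin 2) ℝ)) atTop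
      (nhds ((T : SL(2,ℝ)) : Matrix (Fin 2) (Fin 2) ℝ))) :
    ∃ n, s n = T := by
  letI τ : TopologicalSpace Γ := TopologicalSpace.induced (Subtype.val : Γ → SL(2, ℝ)) slTopology
  have hτ : τ = TopologicalSpace.induced
      (fun γ : Γ => ((γ : SL(2,ℝ)) : Matrix (Fin 2) (Fin 2) ℝ)) inferInstance := by
    rw [show τ = TopologicalSpace.induced (Subtype.val : Γ → SL(2, ℝ)) slTopology from rfl,
      slTopology, induced_compose]
    rfl
  have hopen : @IsOpen Γ τ {(⟨T, hT⟩ : Γ)} := @isOpen_discrete _ τ hdisc _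
  rw [hτ, isOpen_induced_iff] at hopen
  obtain ⟨V, hV, hVeq⟩ := hopen
  have hTV : ((T : SL(2,ℝ)) : Matrix (Fin 2) (Fin 2) ℝ) ∈ V := by
    have : (⟨T, hT⟩ : Γ) ∈ (fun γ : Γ => ((γ : SL(2,ℝ)) : Matrix (Fin 2) (Fin 2) ℝ)) ⁻¹' V := by
      rw [hVeq]; rfl
    exact this
  have := hlim.eventually (hV.mem_nhds hTV)
  obtain ⟨n, hn⟩ := this.exists
  refine ⟨n, ?_⟩
  have : (⟨s n, hs n⟩ : Γ) ∈ (fun γ : Γ => ((γ : SL(2,ℝ)) : Matrix (Fin 2) (Fin 2) ℝ)) ⁻¹' V := hn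
  rw [hVeq] at this
  simpa using congrArg Subtype.val this

lemma detg (g : SL(2,ℝ)) : g 0 0 * g 1 1 - g 0 1 * g 1 0 = 1 := by
  have := g.2
  rwa [Matrix.det_fin_two] at this

lemma conj_entries (A : SL(2,ℝ)) :
    (A * T * A⁻¹) 0 0 = 1 - A 0 0 * A 1 0 ∧
    (A * T * A⁻¹) 0 1 = A 0 0 ^ 2 ∧
    (A * T * A⁻¹) 1 0 = -(A 1 0 ^ 2) ∧
    (A * T * A⁻¹) 1 1 = 1 + A 0 0 * A 1 0 := by
  have hdet := detg A
  simp only [Matrix.SpecialLinearGroup.coe_mul, Matrix.mul_apply, Fin.sum_univ_two]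
  rw [Matrix.SpecialLinearGroup.SL2_inv_expl]
  refine ⟨?_, ?_, ?_, ?_⟩ <;>
      simp [Matrix.SpecialLinearGroup.coe_mul, Matrix.mul_apply, Fin.sum_univ_two, T]
  · linear_combination hdet
  · ring
  · ring
  · linear_combination hdet

open Filter in
lemma shimura (Γ : Subgroup SL(2, ℝ)) (hdisc : IsDiscreteSubgroup Γ) (hT : T ∈ Γ) :
    ∀ g ∈ Γ, g 1 0 ≠ 0 → 1 ≤ |g 1 0| := by
  intro g hg hgc
  by_contra hlt
  push_neg at hlt
  set c : ℝ := |g 1 0| with hc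
  have hc0 : 0 ≤ c := abs_nonneg _
  have hc1 : c < 1 := hlt
  set s : ℕ → SL(2,ℝ) := fun n => (fun A => A * T * A⁻¹)^[n] g with hsdef
  have hs0 : s 0 = g := rfl
  have hsrec : ∀ n, s (n+1) = s n * T * (s n)⁻¹ := fun n => by
    simp only [hsdef, Function.iterate_succ_apply']
  have hmem : ∀ n, s n ∈ Γ := by
    intro n; induction n with
    | zero => exact hg
    | succ n ih => rw [hsrec]; exact mul_mem (mul_mem ih hT) (inv_mem ih)
  have hcb : ∀ n, s n 1 0 ≠ 0 ∧ |s n 1 0| ≤ c ^ (n+1) := by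
    intro n; induction n with
    | zero => exact ⟨hgc, by simp [hs0, hc]⟩
    | succ n ih =>
      rw [hsrec, (conj_entries (s n)).2.2.1]
      constructor
      · simpa using pow_ne_zero 2 ih.1
      · rw [abs_neg, _root_.abs_pow]
        calc |s n 1 0| ^ 2 ≤ (c ^ (n+1)) ^ 2 :=
              pow_le_pow_left₀ (abs_nonneg _) ih.2 2
          _ = c ^ (2*n+2) := by ring
          _ ≤ c ^ (n+2) := pow_le_pow_of_le_one hc0 hc1.le (by omega)
  set M : ℝ := max (|g 0 0|) (1/(1-c)) with hM
  have h1c : 0 < 1 - c := by linarith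
  have hM1 : 1/(1-c) ≤ M := le_max_right _ _
  have hMc : 1 + M * c ≤ M := by
    have h2 : 1 ≤ M * (1 - c) := by
      rw [div_le_iff₀ h1c] at hM1
      linarith
    nlinarith
  have hMpos : 0 < M := by
    have : (0:ℝ) < 1/(1-c) := by positivity
    exact lt_of_lt_of_le this hM1
  have ha : ∀ n, |s n 0 0| ≤ M := by
    intro n; induction n with
    | zero => exact le_max_left _ _
    | succ n ih =>
      rw [hsrec, (conj_entries (s n)).1]
      calc |1 - s n 0 0 * s n 1 0| ≤ 1 + |s n 0 0| * |s n 1 0| := by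
            rw [← abs_mul]
            calc _ ≤ |(1:ℝ)| + |s n 0 0 * s n 1 0| := abs_sub _ _
              _ = 1 + |s n 0 0 * s n 1 0| := by norm_num
        _ ≤ 1 + M * c := by
            have h2 : |s n 1 0| ≤ c := le_trans (hcb n).2
              (pow_le_of_le_one hc0 hc1.le (by omega))
            have := mul_le_mul ih h2 (abs_nonneg _) hMpos.le
            linarith
        _ ≤ M := hMc
  have htend : Tendsto (fun n : ℕ => c ^ (n+1)) atTop (nhds 0) :=
    (tendsto_pow_atTop_nhds_zero_of_lt_one hc0 hc1).comp (tendsto_add_atTop_nat 1)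
  have htendM : Tendsto (fun n : ℕ => M * c ^ (n+1)) atTop (nhds 0) := by
    simpa using htend.const_mul M
  have lc : Tendsto (fun n => s n 1 0) atTop (nhds 0) :=
    squeeze_zero_norm (fun n => by simpa [Real.norm_eq_abs] using (hcb n).2) htend
  have la : Tendsto (fun n => s n 0 0) atTop (nhds 1) := by
    rw [← Filter.tendsto_add_atTop_iff_nat 1]
    have key : Tendsto (fun n => s (n+1) 0 0 - 1) atTop (nhds 0) := by
      apply squeeze_zero_norm (a := fun n => M * c ^ (n+1)) ?_ htendM
      intro n
      rw [hsrec, (conj_entries (s n)).1, Real.norm_eq_abs]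
      have : (1 : ℝ) - s n 0 0 * s n 1 0 - 1 = -(s n 0 0 * s n 1 0) := by ring
      rw [this, abs_neg, abs_mul]
      exact mul_le_mul (ha n) (le_trans (hcb n).2 le_rfl) (abs_nonneg _) hMpos.le
    have := key.add (tendsto_const_nhds (x := (1:ℝ)))
    simpa using this
  have ld : Tendsto (fun n => s n 1 1) atTop (nhds 1) := by
    rw [← Filter.tendsto_add_atTop_iff_nat 1]
    have key : Tendsto (fun n => s (n+1) 1 1 - 1) atTop (nhds 0) := by
      apply squeeze_zero_norm (a := fun n => M * c ^ (n+1)) ?_ htendM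
      intro n
      rw [hsrec, (conj_entries (s n)).2.2.2, Real.norm_eq_abs]
      have : (1 : ℝ) + s n 0 0 * s n 1 0 - 1 = s n 0 0 * s n 1 0 := by ring
      rw [this, abs_mul]
      exact mul_le_mul (ha n) (le_trans (hcb n).2 le_rfl) (abs_nonneg _) hMpos.le
    have := key.add (tendsto_const_nhds (x := (1:ℝ)))
    simpa using this
  have lb : Tendsto (fun n => s n 0 1) atTop (nhds 1) := by
    rw [← Filter.tendsto_add_atTop_iff_nat 1]
    have : (fun n => s (n+1) 0 1) = fun n => (s n 0 0)^2 := by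
      funext n; rw [hsrec, (conj_entries (s n)).2.1]
    rw [this]
    simpa using la.pow 2
  have hlim : Tendsto (fun n => ((s n : SL(2,ℝ)) : Matrix (Fin 2) (Fin 2) ℝ)) atTop
      (nhds ((T : SL(2,ℝ)) : Matrix (Fin 2) (Fin 2) ℝ)) := by
    refine tendsto_pi_nhds.mpr ?_
    intro i
    refine tendsto_pi_nhds.mpr ?_
    intro j
    fin_cases i <;> fin_cases j <;> simp [T] <;>
      [exact la; exact lb; exact lc; exact ld]
  obtain ⟨n, hn⟩ := discrete_eventually Γ hdisc hT s hmem hlim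
  have : s n 1 0 = 0 := by rw [hn]; simp [T]
  exact (hcb n).1 this

lemma T_zpow_coe (n : ℤ) :
    ((T ^ n : SL(2,ℝ)) : Matrix (Fin 2) (Fin 2) ℝ) = !![1, (n:ℝ); 0, 1] := by
  induction n using Int.induction_on with
  | zero => simp [Matrix.SpecialLinearGroup.coe_one, Matrix.one_fin_two]
  | succ n ih =>
    rw [_root_.zpow_add, zpow_one, Matrix.SpecialLinearGroup.coe_mul, ih]
    show _ * (T : Matrix (Fin 2) (Fin 2) ℝ) = _
    rw [show ((T : SL(2,ℝ)) : Matrix (Fin 2) (Fin 2) ℝ) = !![1,1;0,1] from rfl]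
    ext i j
    fin_cases i <;> fin_cases j <;>
      simp [Matrix.mul_apply, Fin.sum_univ_two] <;> push_cast <;> ring
  | pred n ih =>
    rw [show (-(n:ℤ) - 1) = (-(n:ℤ)) + (-1) by ring, _root_.zpow_add,
      Matrix.SpecialLinearGroup.coe_mul, ih, _root_.zpow_neg_one,
      Matrix.SpecialLinearGroup.SL2_inv_expl]
    ext i j
    rw [Matrix.mul_apply, Fin.sum_univ_two]
    fin_cases i <;> fin_cases j <;>
      simp [Matrix.mul_apply, Fin.sum_univ_two, T] <;> push_cast <;> ring

lemma smul_coe (g : SL(2,ℝ)) (z : ℍ) : ((g • z : ℍ) : ℂ)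
    = ((g 0 0 : ℂ) * z + g 0 1) / ((g 1 0 : ℂ) * z + g 1 1) := by
  rw [UpperHalfPlane.specialLinearGroup_apply]
  simp

lemma denom_ne_zero' (g : SL(2,ℝ)) (z : ℍ) : (g 1 0 : ℂ) * z + g 1 1 ≠ 0 := by
  intro h0
  have him : (g 1 0) * z.im = 0 := by
    have := congrArg Complex.im h0
    simp only [Complex.add_im, Complex.mul_im, Complex.ofReal_re, Complex.ofReal_im,
      UpperHalfPlane.coe_im, UpperHalfPlane.coe_re, Complex.zero_im, zero_mul, add_zero,
      mul_zero] at this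
    linarith
  have hc : (g 1 0 : ℝ) = 0 := by
    rcases mul_eq_zero.mp him with h | h
    · exact h
    · exact absurd h z.im_ne_zero
  have hre : (g 1 1 : ℝ) = 0 := by
    have := congrArg Complex.re h0
    simpa [hc] using this
  have hdet := g.2
  rw [Matrix.det_fin_two] at hdet
  rw [show g 1 0 = (g : Matrix (Fin 2) (Fin 2) ℝ) 1 0 from rfl] at hc
  rw [show g 1 1 = (g : Matrix (Fin 2) (Fin 2) ℝ) 1 1 from rfl] at hre
  rw [hc, hre] at hdet
  norm_num at hdet

lemma neg_smul_eq (g : SL(2,ℝ)) (z : ℍ) : (-g) • z = g • z := by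
  apply UpperHalfPlane.ext
  rw [smul_coe, smul_coe]
  have h0 : ((-g : SL(2,ℝ)) : Matrix (Fin 2) (Fin 2) ℝ) = -(g : Matrix (Fin 2) (Fin 2) ℝ) :=
    Matrix.SpecialLinearGroup.coe_neg g
  have e : ∀ i j, (-g : SL(2,ℝ)) i j = -(g i j) := by
    intro i j; show ((-g : SL(2,ℝ)) : Matrix (Fin 2) (Fin 2) ℝ) i j = _; rw [h0]; simp
  rw [e, e, e, e]
  push_cast
  rw [div_eq_div_iff]
  · ring
  · simpa using denom_ne_zero' (-g) z
  · exact denom_ne_zero' g z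

lemma div_im_eq (a b c d : ℝ) (hdet : a * d - b * c = 1) (z : ℂ) (hz : (c:ℂ) * z + d ≠ 0) :
    (((a:ℂ) * z + b) / ((c:ℂ) * z + d)).im = z.im / Complex.normSq ((c:ℂ) * z + d) := by
  have hns : Complex.normSq ((c:ℂ) * z + d) ≠ 0 := by
    simpa [Complex.normSq_eq_zero] using hz
  rw [Complex.div_im]
  simp only [Complex.add_im, Complex.add_re, Complex.mul_re, Complex.mul_im,
    Complex.ofReal_re, Complex.ofReal_im]
  field_simp
  linear_combination z.im * hdet

lemma smul_im_eq (g : SL(2,ℝ)) (z : ℍ) :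
    (g • z).im = z.im / Complex.normSq ((g 1 0 : ℂ) * z + g 1 1) := by
  have h0 : (g • z).im = ((g • z : ℍ) : ℂ).im := rfl
  rw [h0, smul_coe]
  exact div_im_eq _ _ _ _ (by linear_combination detg g) z (denom_ne_zero' g z)

lemma dist_le_dist_iff_abs (z w w' : ℍ) (him : w.im = w'.im) :
    dist z w ≤ dist z w' ↔ ‖(z:ℂ) - w‖ ≤ ‖(z:ℂ) - w'‖ := by
  rw [UpperHalfPlane.dist_eq, UpperHalfPlane.dist_eq, him]
  rw [mul_le_mul_iff_right₀ (by norm_num : (0:ℝ) < 2), Real.arsinh_le_arsinh,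
    div_le_div_iff_of_pos_right (by positivity : (0:ℝ) < 2 * Real.sqrt (z.im * w'.im))]
  rw [Complex.dist_eq, Complex.dist_eq]

lemma dist_eq_dist_iff_abs (z w w' : ℍ) (him : w.im = w'.im) :
    dist z w = dist z w' ↔ ‖(z:ℂ) - w‖ = ‖(z:ℂ) - w'‖ := by
  constructor
  · intro hd
    exact le_antisymm ((dist_le_dist_iff_abs z w w' him).mp hd.le)
      ((dist_le_dist_iff_abs z w' w him.symm).mp hd.ge)
  · intro hd
    exact le_antisymm ((dist_le_dist_iff_abs z w w' him).mpr hd.le)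
      ((dist_le_dist_iff_abs z w' w him.symm).mpr hd.ge)

lemma translate_smul_coe (g : SL(2,ℝ)) (m : ℝ)
    (hg : (g : Matrix (Fin 2) (Fin 2) ℝ) = !![1,m;0,1]) (z : ℍ) :
    ((g • z : ℍ) : ℂ) = (z : ℂ) + m := by
  rw [smul_coe]
  have e : ∀ i j, (g i j : ℝ) = !![(1:ℝ),m;0,1] i j := fun i j => by rw [← hg]
  rw [e 0 0, e 0 1, e 1 0, e 1 1]
  simp

lemma T_smul_coe (z : ℍ) : ((T • z : ℍ) : ℂ) = (z : ℂ) + 1 := by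
  simpa using translate_smul_coe T 1 rfl z

lemma Tinv_smul_coe (z : ℍ) : ((T⁻¹ • z : ℍ) : ℂ) = (z : ℂ) - 1 := by
  have h1 : (T⁻¹ : SL(2,ℝ)) = T ^ (-1 : ℤ) := (zpow_neg_one T).symm
  rw [h1]
  have := translate_smul_coe (T ^ (-1:ℤ)) (-1) (by rw [T_zpow_coe]; norm_num) z
  rw [this]; push_cast; ring

lemma Tzpow_smul_coe (n : ℤ) (z : ℍ) : ((T ^ n • z : ℍ) : ℂ) = (z : ℂ) + n :=
  translate_smul_coe (T ^ n) n (T_zpow_coe n) z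

lemma z0_re (Γ : Subgroup SL(2,ℝ)) (hdisc : IsDiscreteSubgroup Γ) (hT : T ∈ Γ)
    (x₀ : ℝ) (z₀ : ℍ) (h : fordSet Γ x₀ = dirichletSet Γ z₀) : z₀.re = x₀ + 1/2 := by
  have hsh := shimura Γ hdisc hT
  have hmem : ∀ r : ℝ, x₀ ≤ r → r ≤ x₀ + 1 →
      (UpperHalfPlane.mk ((r:ℂ) + Complex.I) (by simp) ∈ fordSet Γ x₀) := by
    intro r h1 h2
    refine ⟨by simpa using h1, by simpa using h2, ?_⟩
    intro g hg hc
    have h1c := hsh g hg hc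
    have him : ((g 1 0 : ℂ) * ((r:ℂ) + Complex.I) + (g 1 1 : ℂ)).im = g 1 0 := by
      simp
    calc (1:ℝ) ≤ |g 1 0| := h1c
      _ = |((g 1 0 : ℂ) * ((r:ℂ) + Complex.I) + (g 1 1 : ℂ)).im| := by rw [him]
      _ ≤ ‖(g 1 0 : ℂ) * ((r:ℂ) + Complex.I) + (g 1 1 : ℂ)‖ :=
          Complex.abs_im_le_norm _
  have himT : z₀.im = (T • z₀).im := by
    have : ((T • z₀ : ℍ) : ℂ).im = ((z₀ : ℂ) + 1).im := by rw [T_smul_coe]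
    simpa using this.symm
  have himTinv : z₀.im = (T⁻¹ • z₀).im := by
    have : ((T⁻¹ • z₀ : ℍ) : ℂ).im = ((z₀ : ℂ) - 1).im := by rw [Tinv_smul_coe]
    simpa using this.symm
  -- upper bound from left point and T⁻¹
  have hp1 : UpperHalfPlane.mk ((x₀:ℂ) + Complex.I) (by simp) ∈ dirichletSet Γ z₀ := by
    rw [← h]; exact hmem x₀ le_rfl (by linarith)
  have hd1 := hp1 T⁻¹ (inv_mem hT)
  rw [dist_le_dist_iff_abs _ _ _ himTinv] at hd1
  rw [show ((T⁻¹ • z₀ : ℍ) : ℂ) = (z₀ : ℂ) - 1 from Tinv_smul_coe z₀] at hd1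
  have hs1 := pow_le_pow_left₀ (norm_nonneg _) hd1 2
  rw [Complex.sq_norm, Complex.sq_norm] at hs1
  simp only [Complex.normSq_apply, Complex.sub_re, Complex.sub_im, Complex.add_re,
    Complex.add_im, Complex.ofReal_re, Complex.ofReal_im, Complex.I_re, Complex.I_im,
    Complex.one_re, Complex.one_im, UpperHalfPlane.coe_re, UpperHalfPlane.coe_im,
    UpperHalfPlane.coe_mk, zero_add, add_zero, sub_zero] at hs1
  -- lower bound from right point and T
  have hp2 : UpperHalfPlane.mk (((x₀+1:ℝ):ℂ) + Complex.I) (by simp) ∈ dirichletSet Γ z₀ := by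
    rw [← h]; exact hmem (x₀+1) (by linarith) le_rfl
  have hd2 := hp2 T hT
  rw [dist_le_dist_iff_abs _ _ _ himT] at hd2
  rw [show ((T • z₀ : ℍ) : ℂ) = (z₀ : ℂ) + 1 from T_smul_coe z₀] at hd2
  have hs2 := pow_le_pow_left₀ (norm_nonneg _) hd2 2
  rw [Complex.sq_norm, Complex.sq_norm] at hs2
  simp only [Complex.normSq_apply, Complex.sub_re, Complex.sub_im, Complex.add_re,
    Complex.add_im, Complex.ofReal_re, Complex.ofReal_im, Complex.I_re, Complex.I_im,
    Complex.one_re, Complex.one_im, UpperHalfPlane.coe_re, UpperHalfPlane.coe_im,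
    UpperHalfPlane.coe_mk, zero_add, add_zero, sub_zero] at hs2
  nlinarith [hs1, hs2]

/-- Every side-pairing of a DF domain identifies each point of the domain either with
itself or with its mirror image in the vertical line `{Re(z) = x₀ + 1/2}`, preserving
imaginary parts. -/
theorem df_domain_side_pairing_reflection (Γ : Subgroup SL(2, ℝ))
    (hdisc : IsDiscreteSubgroup Γ) (hT : T ∈ Γ)
    (hpar : ∀ g ∈ Γ, g 1 0 = 0 → ∃ n : ℤ, g = T ^ n ∨ g = -(T ^ n))
    (x₀ : ℝ) (z₀ : ℍ) (h : fordSet Γ x₀ = dirichletSet Γ z₀) :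
    ∀ γ ∈ Γ, ∀ v ∈ fordSet Γ x₀, γ • v ∈ fordSet Γ x₀ →
      (γ • v).im = v.im ∧
        ((γ • v).re = v.re ∨ (γ • v).re + v.re = 2 * x₀ + 1) := by
  intro γ hγ v hv hγv
  by_cases hc : γ 1 0 = 0
  · -- parabolic case: γ = ± Tⁿ acts as translation by n
    obtain ⟨n, hn⟩ := hpar γ hγ hc
    have hact : ((γ • v : ℍ) : ℂ) = (v : ℂ) + n := by
      rcases hn with hn | hn
      · rw [hn]; exact Tzpow_smul_coe n v
      · rw [hn, neg_smul_eq]; exact Tzpow_smul_coe n v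
    have him : (γ • v).im = v.im := by
      have : ((γ • v : ℍ) : ℂ).im = ((v : ℂ) + n).im := by rw [hact]
      simpa using this
    have hre : (γ • v).re = v.re + n := by
      have : ((γ • v : ℍ) : ℂ).re = ((v : ℂ) + n).re := by rw [hact]
      simpa using this
    refine ⟨him, ?_⟩
    have h1 := hv.1
    have h2 := hv.2.1
    have h3 := hγv.1
    have h4 := hγv.2.1
    rw [hre] at h3 h4 ⊢
    have hn1 : (-1 : ℝ) ≤ (n : ℝ) := by linarith
    have hn2 : (n : ℝ) ≤ 1 := by linarith
    have hn1' : (-1 : ℤ) ≤ n := by exact_mod_cast hn1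
    have hn2' : n ≤ (1 : ℤ) := by exact_mod_cast hn2
    interval_cases n
    · right; push_cast; push_cast at h3 h4; linarith
    · left; push_cast; ring
    · right; push_cast; push_cast at h3 h4; linarith
  · -- hyperbolic side-pairing case
    have hdet : (γ 0 0 : ℂ) * γ 1 1 - γ 0 1 * γ 1 0 = 1 := by
      exact_mod_cast congrArg (fun r : ℝ => (r : ℂ)) (detg γ)
    have hinv10 : (γ⁻¹ : SL(2,ℝ)) 1 0 = -(γ 1 0) := by
      rw [Matrix.SpecialLinearGroup.SL2_inv_expl]; rfl
    have hinv11 : (γ⁻¹ : SL(2,ℝ)) 1 1 = γ 0 0 := by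
      rw [Matrix.SpecialLinearGroup.SL2_inv_expl]; rfl
    have habs1 : 1 ≤ ‖(γ 1 0 : ℂ) * (v : ℂ) + (γ 1 1 : ℂ)‖ :=
      hv.2.2 γ hγ hc
    have hkey : ((γ⁻¹ : SL(2,ℝ)) 1 0 : ℂ) * ((γ • v : ℍ) : ℂ) + ((γ⁻¹ : SL(2,ℝ)) 1 1 : ℂ)
        = 1 / ((γ 1 0 : ℂ) * (v : ℂ) + (γ 1 1 : ℂ)) := by
      have hD := denom_ne_zero' γ v
      rw [hinv10, hinv11, smul_coe, eq_div_iff hD]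
      push_cast
      rw [add_mul, mul_assoc, div_mul_cancel₀ _ hD]
      linear_combination hdet
    have habs2 : 1 ≤ ‖((γ⁻¹ : SL(2,ℝ)) 1 0 : ℂ) * ((γ • v : ℍ) : ℂ)
        + ((γ⁻¹ : SL(2,ℝ)) 1 1 : ℂ)‖ := by
      apply hγv.2.2 γ⁻¹ (inv_mem hγ)
      rw [hinv10]
      exact neg_ne_zero.mpr hc
    rw [hkey] at habs2
    rw [norm_div, norm_one] at habs2
    have habs_eq : ‖(γ 1 0 : ℂ) * (v : ℂ) + (γ 1 1 : ℂ)‖ = 1 := by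
      have hpos : 0 < ‖(γ 1 0 : ℂ) * (v : ℂ) + (γ 1 1 : ℂ)‖ := by
        apply norm_pos_iff.mpr
        exact denom_ne_zero' γ v
      rw [le_div_iff₀ hpos, one_mul] at habs2
      linarith
    have him : (γ • v).im = v.im := by
      rw [smul_im_eq, ← Complex.sq_norm, habs_eq]
      norm_num
    refine ⟨him, ?_⟩
    -- Dirichlet conditions
    have hvD : v ∈ dirichletSet Γ z₀ := by rw [← h]; exact hv
    have hγvD : γ • v ∈ dirichletSet Γ z₀ := by rw [← h]; exact hγv
    have hd1 : dist v z₀ ≤ dist (γ • v) z₀ := by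
      have := hvD γ⁻¹ (inv_mem hγ)
      calc dist v z₀ ≤ dist v (γ⁻¹ • z₀) := this
        _ = dist (γ • v) (γ • γ⁻¹ • z₀) := (dist_smul γ v (γ⁻¹ • z₀)).symm
        _ = dist (γ • v) z₀ := by rw [smul_inv_smul]
    have hd2 : dist (γ • v) z₀ ≤ dist v z₀ := by
      have := hγvD γ hγ
      calc dist (γ • v) z₀ ≤ dist (γ • v) (γ • z₀) := this
        _ = dist v z₀ := dist_smul γ v z₀
    have hdeq : dist (γ • v) z₀ = dist v z₀ := le_antisymm hd2 hd1
    -- convert to Euclidean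
    have habs : ‖((γ • v : ℍ) : ℂ) - z₀‖ = ‖(v : ℂ) - z₀‖ := by
      have h1 : dist (γ • v) z₀ = 2 * Real.arsinh
          (‖((γ • v : ℍ) : ℂ) - z₀‖ / (2 * Real.sqrt ((γ • v).im * z₀.im))) := by
        rw [UpperHalfPlane.dist_eq, Complex.dist_eq]
      have h2 : dist v z₀ = 2 * Real.arsinh
          (‖((v : ℍ) : ℂ) - z₀‖ / (2 * Real.sqrt (v.im * z₀.im))) := by
        rw [UpperHalfPlane.dist_eq, Complex.dist_eq]
      rw [h1, h2, him] at hdeq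
      have h3 := mul_left_cancel₀ (two_ne_zero' ℝ) hdeq
      have h4 := Real.arsinh_injective h3
      have h5 : (0:ℝ) < 2 * Real.sqrt (v.im * z₀.im) := by
        have := v.im_pos; have := z₀.im_pos; positivity
      have h6 : ‖((γ • v : ℍ) : ℂ) - z₀‖ / (2 * Real.sqrt (v.im * z₀.im))
          * (2 * Real.sqrt (v.im * z₀.im))
          = ‖((v : ℍ) : ℂ) - z₀‖ / (2 * Real.sqrt (v.im * z₀.im))
          * (2 * Real.sqrt (v.im * z₀.im)) := by rw [h4]
      rw [div_mul_cancel₀ _ (ne_of_gt h5), div_mul_cancel₀ _ (ne_of_gt h5)] at h6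
      exact h6
    have hsq := congrArg (fun r : ℝ => r^2) habs
    rw [Complex.sq_norm, Complex.sq_norm] at hsq
    simp only [Complex.normSq_apply, Complex.sub_re, Complex.sub_im,
      UpperHalfPlane.coe_re, UpperHalfPlane.coe_im] at hsq
    rw [him] at hsq
    have h7 : ((γ • v).re - z₀.re)^2 = (v.re - z₀.re)^2 := by nlinarith [hsq]
    have hz := z0_re Γ hdisc hT x₀ z₀ h
    rcases sq_eq_sq_iff_eq_or_eq_neg.mp h7 with h8 | h8
    · left; linarith
    · right; rw [hz] at h8; linarith
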